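/- For n ≥ 1, if e₀ is a complex number satisfying 3n²e₀^{2n} + n(n+5)e₀^n + 2 = 0 (i.e., an extraneous fixed point of C_n), then the multiplier satisfies C_n'(e₀) = 1 + (1/2)·n²e₀^n·(n(n-1)e₀^n - (n+1))/(ne₀^n + 1)⁴, and since ne₀^n < 0 (e₀^n is real and negative), this multiplier is a real number strictly greater than 1. Hence all extraneous fixed points of C_n are repelling. -/

import Mathlib

/-- The rational map given by the Chebyshev's method applied to `z·e^{z^n}`. -/
noncomputable def Cn (n : ℕ) (z : ℂ) : ℂ :=
  (n:ℂ) * z^(n+1) * (2*(n:ℂ)^2*z^(2*n) + 3*(n:ℂ)*z^n - (n:ℂ) + 1) /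
    (2 * ((n:ℂ)*z^n + 1)^3)

/-- Derivative of `Cn` at a point where the denominator does not vanish. -/
lemma Cn_deriv (n : ℕ) (e₀ : ℂ) (hd : (n:ℂ)*e₀^n + 1 ≠ 0) :
    deriv (Cn n) e₀ =
      (((n:ℂ) * (↑(n+1) * e₀^(n+1-1)) * (2*(n:ℂ)^2*e₀^(2*n) + 3*(n:ℂ)*e₀^n - (n:ℂ) + 1)
        + (n:ℂ) * e₀^(n+1) * (2*(n:ℂ)^2*(↑(2*n)*e₀^(2*n-1)) + 3*(n:ℂ)*(↑n*e₀^(n-1))))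
        * (2 * ((n:ℂ)*e₀^n + 1)^3)
      - ((n:ℂ) * e₀^(n+1) * (2*(n:ℂ)^2*e₀^(2*n) + 3*(n:ℂ)*e₀^n - (n:ℂ) + 1))
        * (2 * (3 * ((n:ℂ)*e₀^n + 1)^2 * ((n:ℂ)*(↑n*e₀^(n-1))))))
      / (2 * ((n:ℂ)*e₀^n + 1)^3)^2 := by
  have hD0 : 2 * ((n:ℂ)*e₀^n + 1)^3 ≠ 0 := by
    simp [pow_ne_zero, hd]
  have hN : HasDerivAt (fun z : ℂ => (n:ℂ) * z^(n+1) * (2*(n:ℂ)^2*z^(2*n) + 3*(n:ℂ)*z^n - (n:ℂ) + 1))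
      ((n:ℂ) * (↑(n+1) * e₀^(n+1-1)) * (2*(n:ℂ)^2*e₀^(2*n) + 3*(n:ℂ)*e₀^n - (n:ℂ) + 1)
        + (n:ℂ) * e₀^(n+1) * (2*(n:ℂ)^2*(↑(2*n)*e₀^(2*n-1)) + 3*(n:ℂ)*(↑n*e₀^(n-1)))) e₀ := by
    have h1 : HasDerivAt (fun z : ℂ => (n:ℂ) * z^(n+1)) ((n:ℂ) * (↑(n+1) * e₀^(n+1-1))) e₀ :=
      (hasDerivAt_pow (n+1) e₀).const_mul _
    have h2 : HasDerivAt (fun z : ℂ => 2*(n:ℂ)^2*z^(2*n) + 3*(n:ℂ)*z^n - (n:ℂ) + 1)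
        (2*(n:ℂ)^2*(↑(2*n)*e₀^(2*n-1)) + 3*(n:ℂ)*(↑n*e₀^(n-1))) e₀ := by
      exact ((((hasDerivAt_pow (2*n) e₀).const_mul _).add
        ((hasDerivAt_pow n e₀).const_mul _)).sub_const _).add_const _
    exact h1.mul h2
  have hDD : HasDerivAt (fun z : ℂ => 2 * ((n:ℂ)*z^n + 1)^3)
      (2 * (3 * ((n:ℂ)*e₀^n + 1)^2 * ((n:ℂ)*(↑n*e₀^(n-1))))) e₀ := by
    have hg : HasDerivAt (fun z : ℂ => (n:ℂ)*z^n + 1) ((n:ℂ)*(↑n*e₀^(n-1))) e₀ :=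
      ((hasDerivAt_pow n e₀).const_mul _).add_const _
    have := (hg.pow 3).const_mul (2:ℂ)
    simpa using this
  have hC : HasDerivAt (Cn n) _ e₀ := hN.div hDD hD0
  exact hC.deriv

/-- If `e₀` is an extraneous fixed point of `C_n` (i.e. `3n²e₀^{2n} + n(n+5)e₀^n + 2 = 0`),
then the multiplier equals `1 + (1/2)·n²e₀^n·(n(n-1)e₀^n - (n+1))/(ne₀^n + 1)⁴`,
`e₀^n` is real and negative, and the multiplier is a real number strictly greater
than `1`; in particular the fixed point is repelling. -/
theorem Cn_extraneous_repelling (n : ℕ) (hn : 1 ≤ n) (e₀ : ℂ)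
    (he : 3*(n:ℂ)^2*e₀^(2*n) + (n:ℂ)*((n:ℂ)+5)*e₀^n + 2 = 0) :
    deriv (Cn n) e₀ =
      1 + (1/2) * ((n:ℂ)^2 * e₀^n * ((n:ℂ)*((n:ℂ)-1)*e₀^n - ((n:ℂ)+1))) /
        ((n:ℂ)*e₀^n + 1)^4 ∧
    (∃ w : ℝ, w < 0 ∧ e₀^n = (w:ℂ)) ∧
    (∃ m : ℝ, 1 < m ∧ deriv (Cn n) e₀ = (m:ℂ)) ∧
    1 < ‖deriv (Cn n) e₀‖ := by
  have hn0C : (n:ℂ) ≠ 0 := Nat.cast_ne_zero.2 (by omega)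
  have hn0 : (n:ℝ) ≠ 0 := Nat.cast_ne_zero.2 (by omega)
  have he' : 3*(n:ℂ)^2*(e₀^n)^2 + (n:ℂ)*((n:ℂ)+5)*(e₀^n) + 2 = 0 := by
    rw [← he, mul_comm 2 n, pow_mul]
  have hd : (n:ℂ)*e₀^n + 1 ≠ 0 := by
    intro h
    exact hn0C (by linear_combination (-1)*he' + (3*(n:ℂ)*e₀^n + (n:ℂ) + 2)*h)
  -- the multiplier formula
  have hderiv : deriv (Cn n) e₀ =
      1 + (1/2) * ((n:ℂ)^2 * e₀^n * ((n:ℂ)*((n:ℂ)-1)*e₀^n - ((n:ℂ)+1))) /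
        ((n:ℂ)*e₀^n + 1)^4 := by
    rw [Cn_deriv n e₀ hd]
    have h11 : n + 1 - 1 = n := by omega
    have h2n : e₀^(2*n) = (e₀^n)^2 := by rw [mul_comm, pow_mul]
    have h2n1 : e₀^(2*n-1) = e₀^(n-1) * e₀^n := by rw [← pow_add]; congr 1; omega
    have hsucc : e₀^(n+1) = e₀^n * e₀ := pow_succ e₀ n
    have hve : e₀^(n-1) * e₀ = e₀^n := by rw [← pow_succ]; congr 1; omega
    rw [h11, h2n, h2n1, hsucc]
    push_cast
    generalize hV : e₀^(n-1) = v at hve ⊢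
    generalize hU : e₀^n = u at he' hd hve ⊢
    have hNum : ((n:ℂ) * ((↑n+1) * u) * (2*(n:ℂ)^2*u^2 + 3*(n:ℂ)*u - (n:ℂ) + 1)
          + (n:ℂ) * (u * e₀) * (2*(n:ℂ)^2*((2*↑n)*(v*u)) + 3*(n:ℂ)*(↑n*v)))
          * (2 * ((n:ℂ)*u + 1)^3)
        - ((n:ℂ) * (u * e₀) * (2*(n:ℂ)^2*u^2 + 3*(n:ℂ)*u - (n:ℂ) + 1))
          * (2 * (3 * ((n:ℂ)*u + 1)^2 * ((n:ℂ)*(↑n*v))))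
        = 2 * ((n:ℂ)*u+1)^2 * (u * (((n:ℂ)*u+1) * ((n:ℂ)*((n:ℂ)+1)*(2*(n:ℂ)^2*u^2 + 3*(n:ℂ)*u - (n:ℂ) + 1) + 4*(n:ℂ)^4*u^2 + 3*(n:ℂ)^3*u)
            - 3*(n:ℂ)^3*u*(2*(n:ℂ)^2*u^2 + 3*(n:ℂ)*u - (n:ℂ) + 1))) := by
      linear_combination (2*(n:ℂ)*u*(4*(n:ℂ)^3*u+3*(n:ℂ)^2)*((n:ℂ)*u+1)^3
        - 6*(n:ℂ)^3*u*(2*(n:ℂ)^2*u^2 + 3*(n:ℂ)*u - (n:ℂ) + 1)*((n:ℂ)*u+1)^2) * hve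
    rw [hNum]
    field_simp
    ring_nf
    linear_combination (4*((n:ℂ)*u+1)^6 * (((n:ℂ)^2 - n)*u - 1) + (4*(n:ℂ)^7*u^7 - 4*(n:ℂ)^8*u^7 + 28*(n:ℂ)^6*u^6 - 24*(n:ℂ)^7*u^6 + 84*(n:ℂ)^5*u^5 - 60*(n:ℂ)^6*u^5 + 140*(n:ℂ)^4*u^4 - 80*(n:ℂ)^5*u^4 + 140*(n:ℂ)^3*u^3 - 60*(n:ℂ)^4*u^3 + 84*(n:ℂ)^2*u^2 - 24*(n:ℂ)^3*u^2 + 27*(n:ℂ)*u - 3*(n:ℂ)^2*u + 3)) * he'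
  -- e₀^n is real and negative
  obtain ⟨w, hwneg, hw⟩ : ∃ w : ℝ, w < 0 ∧ e₀^n = (w:ℂ) := by
    have hnpos : (0:ℝ) < n := by positivity
    set s := Real.sqrt ((n:ℝ)^2 + 10*n + 1) with hs
    have hs2 : s^2 = (n:ℝ)^2 + 10*n + 1 := Real.sq_sqrt (by positivity)
    have hsnn : 0 ≤ s := Real.sqrt_nonneg _
    have hslt : s < (n:ℝ) + 5 := by nlinarith
    set w₁ : ℝ := (-(n+5) + s)/(6*n) with hw1
    set w₂ : ℝ := (-(n+5) - s)/(6*n) with hw2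
    have hw1neg : w₁ < 0 := div_neg_of_neg_of_pos (by linarith) (by positivity)
    have hw2neg : w₂ < 0 := div_neg_of_neg_of_pos (by linarith) (by positivity)
    have hs2C : ((s:ℂ))^2 = (n:ℂ)^2 + 10*(n:ℂ) + 1 := by
      have := congrArg (Complex.ofReal) hs2
      push_cast at this
      exact this
    have hfact : 3*(n:ℂ)^2 * (e₀^n - (w₁:ℝ)) * (e₀^n - (w₂:ℝ)) = 0 := by
      rw [hw1, hw2]
      push_cast
      rw [← he']
      field_simp
      ring_nf
      linear_combination (-3:ℂ) * hs2C
    rcases mul_eq_zero.1 hfact with h | h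
    · rcases mul_eq_zero.1 h with h' | h'
      · exact absurd h' (mul_ne_zero (by norm_num) (pow_ne_zero _ hn0C))
      · exact ⟨w₁, hw1neg, by linear_combination h'⟩
    · exact ⟨w₂, hw2neg, by linear_combination h⟩
  -- the multiplier is a real number > 1
  have hdR : (n:ℝ)*w + 1 ≠ 0 := by
    intro h
    apply hd
    rw [hw]
    have := congrArg (Complex.ofReal) h
    push_cast at this
    simpa using this
  set m : ℝ := 1 + (1/2) * ((n:ℝ)^2 * w * ((n:ℝ)*((n:ℝ)-1)*w - ((n:ℝ)+1))) /
      ((n:ℝ)*w + 1)^4 with hm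
  have hn1 : (1:ℝ) ≤ n := by exact_mod_cast hn
  have h4pos : 0 < ((n:ℝ)*w+1)^4 :=
    lt_of_le_of_ne (by positivity) (Ne.symm (pow_ne_zero _ hdR))
  have hf1 : (n:ℝ)^2 * w < 0 := mul_neg_of_pos_of_neg (by positivity) hwneg
  have hf2 : (n:ℝ)*((n:ℝ)-1)*w - ((n:ℝ)+1) < 0 := by nlinarith
  have hnum : 0 < (n:ℝ)^2 * w * ((n:ℝ)*((n:ℝ)-1)*w - ((n:ℝ)+1)) :=
    mul_pos_of_neg_of_neg hf1 hf2
  have hm1 : 1 < m := by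
    rw [hm]
    have h' : 0 < (1/2 * ((n:ℝ)^2 * w * ((n:ℝ)*((n:ℝ)-1)*w - ((n:ℝ)+1)))) /
        ((n:ℝ)*w + 1)^4 := div_pos (by linarith) h4pos
    linarith
  have hmC : deriv (Cn n) e₀ = (m:ℂ) := by
    rw [hderiv, hw, hm]
    push_cast
    ring
  refine ⟨hderiv, ⟨w, hwneg, hw⟩, ⟨m, hm1, hmC⟩, ?_⟩
  rw [hmC, Complex.norm_real, Real.norm_eq_abs, abs_of_pos (by linarith)]
  exact hm1
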